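/- arXiv:1608.02779 — 8 statements merged into one kernel-verified Lean document; each statement's English description precedes it below -/
import Mathlib

section
/- The sum rule Σ_{γ ∈ Z_{≥0}^n} Φ_q(γ|β; λ,μ) = 1 holds for all β ∈ Z_{≥0}^n, where Φ_q(γ|β;λ,μ) = q^{φ(β-γ,γ)} (μ/λ)^{|γ|} (λ;q)_{|γ|}(μ/λ;q)_{|β|-|γ|}/(μ;q)_{|β|} ∏_i binom_q(β_i,γ_i). -/
open scoped BigOperators

noncomputable section

/-- The q-Pochhammer symbol `(z;q)_m = ∏_{j=0}^{m-1} (1 - z q^j)`. -/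
def qP (q z : ℝ) (m : ℕ) : ℝ := ∏ j ∈ Finset.range m, (1 - z * q ^ j)

/-- The q-binomial coefficient, zero outside `0 ≤ k ≤ m`. -/
def qBinom (q : ℝ) (m k : ℕ) : ℝ :=
  if k ≤ m then qP q q m / (qP q q k * qP q q (m - k)) else 0

/-- `|α| = α_1 + ⋯ + α_n`. -/
def wt {n : ℕ} (α : Fin n → ℕ) : ℕ := ∑ i, α i

/-- `φ(α,β) = ∑_{i<j} α_i β_j` for integer arrays. -/
def phiZ {n : ℕ} (α β : Fin n → ℤ) : ℤ :=
  ∑ i, ∑ j, if i < j then α i * β j else 0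

/-- coercion of a nonnegative-integer array to an integer array -/
def zc {n : ℕ} (α : Fin n → ℕ) : Fin n → ℤ := fun i => (α i : ℤ)

/-- The weight function `Φ_q(γ|β; λ,μ)`. -/
def Phi {n : ℕ} (q lam mu : ℝ) (γ β : Fin n → ℕ) : ℝ :=
  q ^ (phiZ (zc β - zc γ) (zc γ)) * (mu / lam) ^ wt γ *
    (qP q lam (wt γ) * qP q (mu / lam) (wt β - wt γ) / qP q mu (wt β)) *
    ∏ i, qBinom q (β i) (γ i)

section Aux

variable {q : ℝ}

lemma qP_succ (q z : ℝ) (m : ℕ) : qP q z (m+1) = qP q z m * (1 - z * q ^ m) :=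
  Finset.prod_range_succ _ _

lemma qP_zero (q z : ℝ) : qP q z 0 = 1 := rfl

lemma qP_pos (hq0 : 0 < q) (hq1 : q < 1) (m : ℕ) : 0 < qP q q m := by
  apply Finset.prod_pos
  intro j _
  have h1 : q ^ j ≤ 1 := pow_le_one₀ hq0.le hq1.le
  nlinarith

lemma qP_ne (hq0 : 0 < q) (hq1 : q < 1) (m : ℕ) : qP q q m ≠ 0 :=
  (qP_pos hq0 hq1 m).ne'

lemma qBinom_zero (hq0 : 0 < q) (hq1 : q < 1) (n : ℕ) : qBinom q n 0 = 1 := by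
  simp [qBinom, qP_zero, div_self (qP_ne hq0 hq1 n)]

lemma qBinom_of_gt {n k : ℕ} (h : n < k) : qBinom q n k = 0 := by
  simp [qBinom, Nat.not_le.mpr h]

lemma qBinom_self (hq0 : 0 < q) (hq1 : q < 1) (n : ℕ) : qBinom q n n = 1 := by
  simp [qBinom, qP_zero, div_self (qP_ne hq0 hq1 n)]

/-- q-Pascal rule, second form. -/
lemma pascal2 (hq0 : 0 < q) (hq1 : q < 1) (n k : ℕ) :
    qBinom q (n+1) (k+1) = q^(k+1) * qBinom q n (k+1) + qBinom q n k := by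
  rcases lt_trichotomy n k with h | rfl | h
  · rw [qBinom_of_gt (by omega), qBinom_of_gt (by omega), qBinom_of_gt (by omega)]
    ring
  · rw [qBinom_self hq0 hq1, qBinom_of_gt (by omega), qBinom_self hq0 hq1]
    ring
  · obtain ⟨d, rfl⟩ : ∃ d, n = k + 1 + d := ⟨n - (k+1), by omega⟩
    rw [qBinom, qBinom, qBinom, if_pos (by omega), if_pos (by omega), if_pos (by omega)]
    rw [show k + 1 + d + 1 - (k + 1) = d + 1 from by omega,
        show k + 1 + d - (k + 1) = d from by omega,
        show k + 1 + d - k = d + 1 from by omega]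
    have h1 : qP q q (k+1) = qP q q k * (1 - q * q ^ k) := qP_succ q q k
    have h2 : qP q q (d+1) = qP q q d * (1 - q * q ^ d) := qP_succ q q d
    have h3 : qP q q (k+1+d+1) = qP q q (k+1+d) * (1 - q * q ^ (k+1+d)) := qP_succ q q _
    have e1 : (1:ℝ) - q * q ^ k ≠ 0 := by
      have : q * q ^ k < 1 := by
        have h1 : q ^ k ≤ 1 := pow_le_one₀ hq0.le hq1.le
        nlinarith
      intro h; nlinarith
    have e2 : (1:ℝ) - q * q ^ d ≠ 0 := by
      have : q * q ^ d < 1 := by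
        have h1 : q ^ d ≤ 1 := pow_le_one₀ hq0.le hq1.le
        nlinarith
      intro h; nlinarith
    rw [h3, h1, h2]
    field_simp [qP_ne hq0 hq1]
    ring

/-- q-Pascal rule, first form. -/
lemma pascal1 (hq0 : 0 < q) (hq1 : q < 1) (n k : ℕ) :
    qBinom q (n+1) (k+1) = qBinom q n (k+1) + q^(n-k) * qBinom q n k := by
  rcases lt_trichotomy n k with h | rfl | h
  · rw [qBinom_of_gt (by omega), qBinom_of_gt (by omega), qBinom_of_gt (by omega)]
    ring
  · rw [qBinom_self hq0 hq1, qBinom_of_gt (by omega), qBinom_self hq0 hq1]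
    simp
  · obtain ⟨d, rfl⟩ : ∃ d, n = k + 1 + d := ⟨n - (k+1), by omega⟩
    rw [qBinom, qBinom, qBinom, if_pos (by omega), if_pos (by omega), if_pos (by omega)]
    rw [show k + 1 + d + 1 - (k + 1) = d + 1 from by omega,
        show k + 1 + d - (k + 1) = d from by omega,
        show k + 1 + d - k = d + 1 from by omega]
    have h1 : qP q q (k+1) = qP q q k * (1 - q * q ^ k) := qP_succ q q k
    have h2 : qP q q (d+1) = qP q q d * (1 - q * q ^ d) := qP_succ q q d
    have h3 : qP q q (k+1+d+1) = qP q q (k+1+d) * (1 - q * q ^ (k+1+d)) := qP_succ q q _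
    have e1 : (1:ℝ) - q * q ^ k ≠ 0 := by
      have : q * q ^ k < 1 := by
        have h1 : q ^ k ≤ 1 := pow_le_one₀ hq0.le hq1.le
        nlinarith
      intro h; nlinarith
    have e2 : (1:ℝ) - q * q ^ d ≠ 0 := by
      have : q * q ^ d < 1 := by
        have h1 : q ^ d ≤ 1 := pow_le_one₀ hq0.le hq1.le
        nlinarith
      intro h; nlinarith
    rw [h3, h1, h2]
    field_simp [qP_ne hq0 hq1]
    ring

/-- q-Vandermonde convolution, summed against an arbitrary function. -/
lemma conv (hq0 : 0 < q) (hq1 : q < 1) (B : ℕ) :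
    ∀ (A : ℕ) (f : ℕ → ℝ),
      ∑ a ∈ Finset.range (A+1), qBinom q A a *
        ∑ j ∈ Finset.range (B+1), qBinom q B j * (q^((A-a)*j) * f (a+j))
      = ∑ k ∈ Finset.range (A+B+1), qBinom q (A+B) k * f k := by
  intro A
  induction A with
  | zero =>
    intro f
    simp [qBinom_zero hq0 hq1]
  | succ A ih =>
    intro f
    have hr : ∑ k ∈ Finset.range (A+1+B+1), qBinom q (A+1+B) k * f k
        = (∑ k ∈ Finset.range (A+B+1), qBinom q (A+B) k * (q^k * f k))
          + (∑ k ∈ Finset.range (A+B+1), qBinom q (A+B) k * f (k+1)) := by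
      rw [show A+1+B+1 = (A+B+1)+1 from by omega, show A+1+B = (A+B)+1 from by omega]
      rw [Finset.sum_range_succ' (fun k => qBinom q (A+B+1) k * f k) (A+B+1)]
      rw [qBinom_zero hq0 hq1, one_mul]
      have e1 : ∀ k ∈ Finset.range (A+B+1), qBinom q (A+B+1) (k+1) * f (k+1)
          = (q^(k+1) * qBinom q (A+B) (k+1) * f (k+1)) + qBinom q (A+B) k * f (k+1) :=
        fun k _ => by rw [pascal2 hq0 hq1]; ring
      rw [Finset.sum_congr rfl e1, Finset.sum_add_distrib]
      have e2 : (∑ k ∈ Finset.range (A+B+1), qBinom q (A+B) k * (q^k * f k))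
          = (∑ k ∈ Finset.range (A+B+1), q^(k+1) * qBinom q (A+B) (k+1) * f (k+1)) + f 0 := by
        rw [Finset.sum_range_succ' (fun k => qBinom q (A+B) k * (q^k * f k)) (A+B)]
        rw [Finset.sum_range_succ (fun k => q^(k+1) * qBinom q (A+B) (k+1) * f (k+1)) (A+B)]
        rw [qBinom_of_gt (show A+B < A+B+1 from Nat.lt_succ_self _), qBinom_zero hq0 hq1]
        simp only [pow_zero, one_mul, mul_zero, zero_mul, add_zero, mul_one]
        congr 1
        apply Finset.sum_congr rfl; intro k _; ring
      rw [e2]; ring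
    have hl : ∑ a ∈ Finset.range (A+1+1), qBinom q (A+1) a *
          ∑ j ∈ Finset.range (B+1), qBinom q B j * (q^((A+1-a)*j) * f (a+j))
        = (∑ a ∈ Finset.range (A+1), qBinom q A a *
            ∑ j ∈ Finset.range (B+1), qBinom q B j * (q^((A-a)*j) * (q^(a+j) * f (a+j))))
          + (∑ a ∈ Finset.range (A+1), qBinom q A a *
            ∑ j ∈ Finset.range (B+1), qBinom q B j * (q^((A-a)*j) * f ((a+j)+1))) := by
      rw [Finset.sum_range_succ' (fun a => qBinom q (A+1) a *
        ∑ j ∈ Finset.range (B+1), qBinom q B j * (q^((A+1-a)*j) * f (a+j))) (A+1)]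
      rw [qBinom_zero hq0 hq1, one_mul]
      have e1 : ∀ a ∈ Finset.range (A+1), qBinom q (A+1) (a+1) *
            (∑ j ∈ Finset.range (B+1), qBinom q B j * (q^((A+1-(a+1))*j) * f ((a+1)+j)))
          = (q^(a+1) * qBinom q A (a+1) *
              ∑ j ∈ Finset.range (B+1), qBinom q B j * (q^((A+1-(a+1))*j) * f ((a+1)+j)))
            + qBinom q A a *
              ∑ j ∈ Finset.range (B+1), qBinom q B j * (q^((A+1-(a+1))*j) * f ((a+1)+j)) :=
        fun a _ => by rw [pascal2 hq0 hq1]; ring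
      rw [Finset.sum_congr rfl e1, Finset.sum_add_distrib]
      have e2 : (∑ a ∈ Finset.range (A+1), qBinom q A a *
            ∑ j ∈ Finset.range (B+1), qBinom q B j * (q^((A+1-(a+1))*j) * f ((a+1)+j)))
          = ∑ a ∈ Finset.range (A+1), qBinom q A a *
            ∑ j ∈ Finset.range (B+1), qBinom q B j * (q^((A-a)*j) * f ((a+j)+1)) := by
        apply Finset.sum_congr rfl; intro a _
        congr 1
        apply Finset.sum_congr rfl; intro j _
        rw [show A+1-(a+1) = A-a from by omega, show (a+1)+j = (a+j)+1 from by omega]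
      have e3 : (∑ a ∈ Finset.range (A+1), qBinom q A a *
            ∑ j ∈ Finset.range (B+1), qBinom q B j * (q^((A-a)*j) * (q^(a+j) * f (a+j))))
          = (∑ a ∈ Finset.range (A+1), q^(a+1) * qBinom q A (a+1) *
              ∑ j ∈ Finset.range (B+1), qBinom q B j * (q^((A+1-(a+1))*j) * f ((a+1)+j)))
            + ∑ j ∈ Finset.range (B+1), qBinom q B j * (q^((A+1-0)*j) * f (0+j)) := by
        rw [Finset.sum_range_succ' (fun a => qBinom q A a *
          ∑ j ∈ Finset.range (B+1), qBinom q B j * (q^((A-a)*j) * (q^(a+j) * f (a+j)))) A]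
        rw [Finset.sum_range_succ (fun a => q^(a+1) * qBinom q A (a+1) *
          ∑ j ∈ Finset.range (B+1), qBinom q B j * (q^((A+1-(a+1))*j) * f ((a+1)+j))) A]
        rw [qBinom_of_gt (show A < A+1 from Nat.lt_succ_self _)]
        simp only [mul_zero, zero_mul, add_zero]
        congr 1
        · apply Finset.sum_congr rfl; intro a ha
          rw [Finset.mem_range] at ha
          rw [Finset.mul_sum, Finset.mul_sum]
          apply Finset.sum_congr rfl; intro j _
          have h1 : q ^ ((A+1-(a+1))*j) = q ^ ((A-(a+1))*j) * q ^ j := by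
            rw [show (A+1-(a+1)) = (A-(a+1)) + 1 from by omega, add_mul, one_mul, pow_add]
          have h2 : q ^ ((a+1)+j) = q^(a+1) * q^j := pow_add q _ _
          rw [h1, h2]; ring
        · rw [qBinom_zero hq0 hq1, one_mul]
          apply Finset.sum_congr rfl; intro j _
          have h1 : q^((A+1-0)*j) = q^((A-0)*j) * q^j := by
            rw [Nat.sub_zero, Nat.sub_zero, show (A+1)*j = A*j + j from by rw [Nat.succ_mul],
              pow_add]
          have h2 : q^(0+j) = q^j := by rw [Nat.zero_add]
          rw [h1, h2]; ring
      rw [e2, e3]; ring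
    rw [hl, hr]
    have w1 := ih (fun m => q ^ m * f m)
    have w2 := ih (fun m => f (m+1))
    rw [w1, w2]

/-- single-variable q-Vandermonde summation. -/
lemma Tlem (lam x : ℝ) (hq0 : 0 < q) (hq1 : q < 1) :
    ∀ N : ℕ, ∑ k ∈ Finset.range (N+1), qBinom q N k * (x^k * (qP q lam k * qP q x (N-k)))
      = qP q (lam*x) N := by
  intro N
  induction N with
  | zero => simp [qBinom_zero hq0 hq1, qP_zero]
  | succ N ih =>
    rw [Finset.sum_range_succ' (fun k => qBinom q (N+1) k *
      (x^k * (qP q lam k * qP q x (N+1-k)))) (N+1)]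
    rw [qBinom_zero hq0 hq1, one_mul]
    have e1 : ∀ j ∈ Finset.range (N+1), qBinom q (N+1) (j+1) *
          (x^(j+1) * (qP q lam (j+1) * qP q x (N+1-(j+1))))
        = qBinom q N (j+1) * (x^(j+1) * (qP q lam (j+1) * qP q x (N-j)))
          + q^(N-j) * qBinom q N j * (x^(j+1) * (qP q lam (j+1) * qP q x (N-j))) := by
      intro j _
      rw [pascal1 hq0 hq1, show N+1-(j+1) = N-j from by omega]
      ring
    rw [Finset.sum_congr rfl e1, Finset.sum_add_distrib]
    have eU : (∑ j ∈ Finset.range (N+1), qBinom q N (j+1) *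
          (x^(j+1) * (qP q lam (j+1) * qP q x (N-j)))) + x^0 * (qP q lam 0 * qP q x (N+1))
        = ∑ k ∈ Finset.range (N+1), qBinom q N k * (x^k * (qP q lam k * qP q x (N+1-k))) := by
      have h1 : ∑ k ∈ Finset.range (N+1+1), qBinom q N k * (x^k * (qP q lam k * qP q x (N+1-k)))
          = (∑ j ∈ Finset.range (N+1), qBinom q N (j+1) *
              (x^(j+1) * (qP q lam (j+1) * qP q x (N+1-(j+1)))))
            + qBinom q N 0 * (x^0 * (qP q lam 0 * qP q x (N+1-0))) :=
        Finset.sum_range_succ' _ _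
      rw [Finset.sum_range_succ (fun k => qBinom q N k *
        (x^k * (qP q lam k * qP q x (N+1-k)))) (N+1),
        qBinom_of_gt (Nat.lt_succ_self N), zero_mul, add_zero] at h1
      rw [h1, qBinom_zero hq0 hq1, one_mul, Nat.sub_zero]
      congr 1
      apply Finset.sum_congr rfl; intro j _
      rw [show N+1-(j+1) = N-j from by omega]
    have key : (∑ k ∈ Finset.range (N+1), qBinom q N k * (x^k * (qP q lam k * qP q x (N+1-k))))
          + (∑ j ∈ Finset.range (N+1), q^(N-j) * qBinom q N j *
              (x^(j+1) * (qP q lam (j+1) * qP q x (N-j))))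
        = ∑ k ∈ Finset.range (N+1), (qBinom q N k * (x^k * (qP q lam k * qP q x (N-k))))
            * (1 - lam*x*q^N) := by
      rw [← Finset.sum_add_distrib]
      apply Finset.sum_congr rfl; intro k hk
      rw [Finset.mem_range] at hk
      have hqk : q^(N-k) * q^k = q^N := by rw [← pow_add]; congr 1; omega
      rw [show N+1-k = (N-k)+1 from by omega, qP_succ q x (N-k), qP_succ q lam k, ← hqk]
      ring
    calc (∑ j ∈ Finset.range (N+1), qBinom q N (j+1) *
            (x^(j+1) * (qP q lam (j+1) * qP q x (N-j))))
          + (∑ j ∈ Finset.range (N+1), q^(N-j) * qBinom q N j *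
              (x^(j+1) * (qP q lam (j+1) * qP q x (N-j))))
          + x^0 * (qP q lam 0 * qP q x (N+1))
        = (∑ k ∈ Finset.range (N+1), qBinom q N k * (x^k * (qP q lam k * qP q x (N+1-k))))
          + (∑ j ∈ Finset.range (N+1), q^(N-j) * qBinom q N j *
              (x^(j+1) * (qP q lam (j+1) * qP q x (N-j)))) := by rw [← eU]; ring
      _ = ∑ k ∈ Finset.range (N+1), (qBinom q N k * (x^k * (qP q lam k * qP q x (N-k))))
            * (1 - lam*x*q^N) := key
      _ = qP q (lam*x) (N+1) := by
          rw [← Finset.sum_mul, ih, qP_succ]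

lemma phiZ_succ {n : ℕ} (α δ : Fin (n+1) → ℤ) :
    phiZ α δ = α 0 * (∑ j, δ (Fin.succ j)) + phiZ (Fin.tail α) (Fin.tail δ) := by
  unfold phiZ
  rw [Fin.sum_univ_succ]
  congr 1
  · rw [Fin.sum_univ_succ]
    simp [Fin.succ_pos, Finset.mul_sum]
  · apply Finset.sum_congr rfl; intro i _
    rw [Fin.sum_univ_succ]
    simp [Fin.succ_lt_succ_iff, Fin.tail]

lemma wt_cons {n : ℕ} (a : ℕ) (g : Fin n → ℕ) : wt (Fin.cons a g) = a + wt g := by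
  simp [wt, Fin.sum_univ_succ]

lemma wt_eq {n : ℕ} (β : Fin (n+1) → ℕ) : wt β = β 0 + wt (Fin.tail β) := by
  simp [wt, Fin.sum_univ_succ, Fin.tail]

lemma Iic_nat (b : ℕ) : Finset.Iic b = Finset.range (b+1) := by
  ext x; simp [Nat.lt_succ_iff]

lemma Iic_pi_succ {n : ℕ} (β : Fin (n+1) → ℕ) (F : (Fin (n+1) → ℕ) → ℝ) :
    ∑ γ ∈ Finset.Iic β, F γ
      = ∑ a ∈ Finset.Iic (β 0), ∑ g ∈ Finset.Iic (Fin.tail β), F (Fin.cons a g) := by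
  rw [← Finset.sum_product']
  apply Finset.sum_nbij' (i := fun γ => ((γ 0 : ℕ), Fin.tail γ))
    (j := fun p => Fin.cons p.1 p.2)
  · intro γ hγ
    rw [Finset.mem_Iic] at hγ
    rw [Finset.mem_product, Finset.mem_Iic, Finset.mem_Iic]
    exact ⟨hγ 0, fun i => hγ i.succ⟩
  · intro p hp
    rw [Finset.mem_product, Finset.mem_Iic, Finset.mem_Iic] at hp
    rw [Finset.mem_Iic]
    intro i
    refine Fin.cases ?_ ?_ i
    · simpa using hp.1
    · intro j; simpa using (show p.2 j ≤ β j.succ from hp.2 j)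
  · intro γ _; exact Fin.cons_self_tail γ
  · intro p _; simp
  · intro γ _; rw [Fin.cons_self_tail]

/-- the multivariate reduction. -/
lemma multi (hq0 : 0 < q) (hq1 : q < 1) :
    ∀ {n : ℕ} (β : Fin n → ℕ) (f : ℕ → ℝ),
      ∑ γ ∈ Finset.Iic β,
          (q ^ (phiZ (zc β - zc γ) (zc γ)) * ∏ i, qBinom q (β i) (γ i)) * f (wt γ)
        = ∑ k ∈ Finset.range (wt β + 1), qBinom q (wt β) k * f k := by
  intro n
  induction n with
  | zero =>
    intro β f
    have hIic : (Finset.Iic β) = {β} := by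
      ext γ
      simp only [Finset.mem_Iic, Finset.mem_singleton]
      exact ⟨fun _ => Subsingleton.elim γ β, fun h => h ▸ le_refl β⟩
    rw [hIic, Finset.sum_singleton]
    have h1 : wt β = 0 := by simp [wt]
    have h2 : phiZ (zc β - zc β) (zc β) = 0 := by simp [phiZ]
    rw [h1, h2]
    simp [qBinom_zero hq0 hq1]
  | succ n ih =>
    intro β f
    rw [Iic_pi_succ β (fun γ =>
      (q ^ (phiZ (zc β - zc γ) (zc γ)) * ∏ i, qBinom q (β i) (γ i)) * f (wt γ))]
    have step1 : ∀ a ∈ Finset.Iic (β 0),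
        (∑ g ∈ Finset.Iic (Fin.tail β),
          (q ^ (phiZ (zc β - zc ((Fin.cons a g : Fin (n+1) → ℕ))) (zc ((Fin.cons a g : Fin (n+1) → ℕ)))) *
            ∏ i, qBinom q (β i) ((Fin.cons a g : Fin (n+1) → ℕ) i)) * f (wt ((Fin.cons a g : Fin (n+1) → ℕ))))
        = qBinom q (β 0) a * ∑ j ∈ Finset.range (wt (Fin.tail β) + 1),
            qBinom q (wt (Fin.tail β)) j * (q ^ ((β 0 - a) * j) * f (a + j)) := by
      intro a ha
      rw [Finset.mem_Iic] at ha
      have e : ∀ g ∈ Finset.Iic (Fin.tail β),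
          (q ^ (phiZ (zc β - zc ((Fin.cons a g : Fin (n+1) → ℕ))) (zc ((Fin.cons a g : Fin (n+1) → ℕ)))) *
            ∏ i, qBinom q (β i) ((Fin.cons a g : Fin (n+1) → ℕ) i)) * f (wt ((Fin.cons a g : Fin (n+1) → ℕ)))
          = qBinom q (β 0) a *
            ((q ^ (phiZ (zc (Fin.tail β) - zc g) (zc g)) *
                ∏ i, qBinom q (Fin.tail β i) (g i)) *
              (q ^ ((β 0 - a) * wt g) * f (a + wt g))) := by
        intro g _
        have hphi : phiZ (zc β - zc ((Fin.cons a g : Fin (n+1) → ℕ))) (zc ((Fin.cons a g : Fin (n+1) → ℕ)))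
            = (((β 0 - a) * wt g : ℕ) : ℤ) + phiZ (zc (Fin.tail β) - zc g) (zc g) := by
          rw [phiZ_succ]
          congr 1
          · have h0 : (zc β - zc ((Fin.cons a g : Fin (n+1) → ℕ))) 0 = ((β 0 : ℤ) - a) := by
              simp [zc]
            have hs : (∑ j, (zc ((Fin.cons a g : Fin (n+1) → ℕ))) (Fin.succ j)) = (wt g : ℤ) := by
              simp [zc, wt, Fin.cons_succ]
            rw [h0, hs, Nat.cast_mul, Nat.cast_sub ha]
        rw [hphi, zpow_add₀ (ne_of_gt hq0), zpow_natCast]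
        rw [Fin.prod_univ_succ]
        simp only [Fin.cons_zero, Fin.cons_succ]
        rw [wt_cons]
        have : (∏ i : Fin n, qBinom q (β i.succ) (g i))
            = ∏ i : Fin n, qBinom q (Fin.tail β i) (g i) := rfl
        rw [this]
        ring
      rw [Finset.sum_congr rfl e, ← Finset.mul_sum]
      congr 1
      have := ih (Fin.tail β) (fun m => q ^ ((β 0 - a) * m) * f (a + m))
      simpa using this
    rw [Finset.sum_congr rfl step1, Iic_nat]
    have hc := conv hq0 hq1 (wt (Fin.tail β)) (β 0) f
    rw [hc, ← wt_eq]

end Aux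

/-- Sum rule: `∑_{γ ∈ Z_{≥0}^n} Φ_q(γ|β;λ,μ) = 1`.  Since `Φ_q(γ|β;λ,μ) = 0`
unless `γ ≤ β` componentwise, the sum over all of `Z_{≥0}^n` reduces to the
finite sum over `γ ≤ β`. -/
theorem sum_rule {n : ℕ} (q lam mu : ℝ) (hq0 : 0 < q) (hq1 : q < 1)
    (hlam : lam ≠ 0) (β : Fin n → ℕ) (hmu : qP q mu (wt β) ≠ 0) :
    ∑ γ ∈ Finset.Iic β, Phi q lam mu γ β = 1 := by
  have key := multi hq0 hq1 β
    (fun k => (mu/lam)^k * (qP q lam k * qP q (mu/lam) (wt β - k) / qP q mu (wt β)))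
  have hL : ∑ γ ∈ Finset.Iic β, Phi q lam mu γ β
      = ∑ γ ∈ Finset.Iic β,
          (q ^ (phiZ (zc β - zc γ) (zc γ)) * ∏ i, qBinom q (β i) (γ i)) *
            ((mu/lam)^(wt γ) * (qP q lam (wt γ) * qP q (mu/lam) (wt β - wt γ) / qP q mu (wt β))) := by
    apply Finset.sum_congr rfl; intro γ _
    unfold Phi
    ring
  rw [hL, key]
  have e : ∀ k ∈ Finset.range (wt β + 1),
      qBinom q (wt β) k * ((mu/lam)^k * (qP q lam k * qP q (mu/lam) (wt β - k) / qP q mu (wt β)))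
      = (qBinom q (wt β) k * ((mu/lam)^k * (qP q lam k * qP q (mu/lam) (wt β - k)))) / qP q mu (wt β) :=
    fun k _ => by ring
  rw [Finset.sum_congr rfl e, ← Finset.sum_div, Tlem lam (mu/lam) hq0 hq1 (wt β)]
  have hx : lam * (mu/lam) = mu := by field_simp
  rw [hx, div_self hmu]
end
end

section
/- The identity (g_γ(λ) g_{α+β-γ}(μ) / (g_α(μ) g_β(λ))) · Φ_q(β|α+β-γ; λ,μ) = q^{φ(α-γ,β-γ)} Φ_q(γ|α; λ,μ) holds for all α,β,γ ∈ Z_{≥0}^n with γ ≤ α. -/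
open scoped BigOperators

noncomputable section

/-- `g_α(μ) = μ^{-|α|} (μ;q)_{|α|} / ∏_i (q;q)_{α_i}`. -/
def gfun {n : ℕ} (q mu : ℝ) (α : Fin n → ℕ) : ℝ :=
  mu ^ (-(wt α : ℤ)) * qP q mu (wt α) / ∏ i, qP q q (α i)

lemma qP_q_pos {q : ℝ} (hq0 : 0 < q) (hq1 : q < 1) (m : ℕ) : 0 < qP q q m := by
  unfold qP
  refine Finset.prod_pos fun j _ => ?_
  have h1 : q ^ j ≤ 1 := pow_le_one₀ hq0.le hq1.le
  nlinarith

lemma phiZ_add_right {n : ℕ} (x y z : Fin n → ℤ) :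
    phiZ x (y + z) = phiZ x y + phiZ x z := by
  unfold phiZ
  rw [← Finset.sum_add_distrib]
  refine Finset.sum_congr rfl fun i _ => ?_
  rw [← Finset.sum_add_distrib]
  refine Finset.sum_congr rfl fun j _ => ?_
  by_cases h : i < j <;> simp [h, Pi.add_apply, mul_add]

lemma step_binom (q : ℝ) (hq0 : 0 < q) (hq1 : q < 1) (m l k : ℕ) (hk : k ≤ m) :
    qBinom q (m + l - k) l * (qP q q m * qP q q l)
      = qBinom q m k * (qP q q k * qP q q (m + l - k)) := by
  have h1 : l ≤ m + l - k := by omega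
  have h2 : m + l - k - l = m - k := by omega
  rw [qBinom, qBinom, if_pos h1, if_pos hk, h2]
  have nz : ∀ s, qP q q s ≠ 0 := fun s => (qP_q_pos hq0 hq1 s).ne'
  field_simp [nz l, nz k, nz (m - k)]

set_option maxHeartbeats 1000000 in
/-- The identity (oys):
`(g_γ(λ) g_{α+β-γ}(μ) / (g_α(μ) g_β(λ))) Φ_q(β|α+β-γ;λ,μ)
  = q^{φ(α-γ,β-γ)} Φ_q(γ|α;λ,μ)` for all `γ ≤ α`. -/
theorem oys_identity {n : ℕ} (q lam mu : ℝ) (hq0 : 0 < q) (hq1 : q < 1)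
    (hlam : lam ≠ 0) (hmu : mu ≠ 0) (α β γ : Fin n → ℕ) (hγ : γ ≤ α)
    (h1 : qP q mu (wt α) ≠ 0) (h2 : qP q mu (wt (α + β - γ)) ≠ 0)
    (h3 : qP q lam (wt β) ≠ 0) :
    gfun q lam γ * gfun q mu (α + β - γ) / (gfun q mu α * gfun q lam β) *
      Phi q lam mu β (α + β - γ)
      = q ^ (phiZ (zc α - zc γ) (zc β - zc γ)) * Phi q lam mu γ α := by
  have hqne : q ≠ 0 := hq0.ne'
  have hγi : ∀ i, γ i ≤ α i := fun i => hγ i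
  have nzq : ∀ s, qP q q s ≠ 0 := fun s => (qP_q_pos hq0 hq1 s).ne'
  have hcle : wt γ ≤ wt α := Finset.sum_le_sum fun i _ => hγi i
  have happ : ∀ i, (α + β - γ) i = (α i - γ i) + β i := fun i => by
    have := hγi i
    simp only [Pi.sub_apply, Pi.add_apply]
    omega
  have hsum : (∑ i, (α i - γ i)) + ∑ i, γ i = ∑ i, α i := by
    rw [← Finset.sum_add_distrib]
    exact Finset.sum_congr rfl fun i _ => Nat.sub_add_cancel (hγi i)
  have hwt' : wt (α + β - γ) = (wt α - wt γ) + wt β := by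
    unfold wt
    rw [Finset.sum_congr rfl fun i _ => happ i, Finset.sum_add_distrib]
    omega
  have hsub : wt (α + β - γ) - wt β = wt α - wt γ := by omega
  -- exponents
  have hzc : zc (α + β - γ) - zc β = zc α - zc γ := by
    funext i
    have := hγi i
    simp only [Pi.sub_apply, Pi.add_apply, zc]
    omega
  have hbdec : zc β = (zc β - zc γ) + zc γ := by funext i; simp
  have hexp : phiZ (zc (α + β - γ) - zc β) (zc β)
      = phiZ (zc α - zc γ) (zc β - zc γ) + phiZ (zc α - zc γ) (zc γ) := by
    rw [hzc]
    nth_rewrite 1 [hbdec]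
    exact phiZ_add_right _ _ _
  -- product identity
  have hPa : (∏ i, qP q q (α i)) ≠ 0 := Finset.prod_ne_zero_iff.2 fun i _ => nzq _
  have hPb : (∏ i, qP q q (β i)) ≠ 0 := Finset.prod_ne_zero_iff.2 fun i _ => nzq _
  have hPc : (∏ i, qP q q (γ i)) ≠ 0 := Finset.prod_ne_zero_iff.2 fun i _ => nzq _
  have hPd : (∏ i, qP q q ((α + β - γ) i)) ≠ 0 := Finset.prod_ne_zero_iff.2 fun i _ => nzq _
  have hBprod : (∏ i, qBinom q ((α + β - γ) i) (β i))
        * ((∏ i, qP q q (α i)) * ∏ i, qP q q (β i))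
      = (∏ i, qBinom q (α i) (γ i))
        * ((∏ i, qP q q (γ i)) * ∏ i, qP q q ((α + β - γ) i)) := by
    rw [← Finset.prod_mul_distrib, ← Finset.prod_mul_distrib,
      ← Finset.prod_mul_distrib, ← Finset.prod_mul_distrib]
    refine Finset.prod_congr rfl fun i _ => ?_
    have h := step_binom q hq0 hq1 (α i) (β i) (γ i) (hγi i)
    have ha : (α + β - γ) i = α i + β i - γ i := by
      simp [Pi.sub_apply, Pi.add_apply]
    rw [ha]
    exact h
  have hB1 : (∏ i, qBinom q ((α + β - γ) i) (β i))
      = (∏ i, qBinom q (α i) (γ i))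
        * ((∏ i, qP q q (γ i)) * ∏ i, qP q q ((α + β - γ) i))
        / ((∏ i, qP q q (α i)) * ∏ i, qP q q (β i)) := by
    rw [eq_div_iff (mul_ne_zero hPa hPb)]
    exact hBprod
  have h2' : qP q mu ((wt α - wt γ) + wt β) ≠ 0 := by rw [← hwt']; exact h2
  unfold Phi gfun
  rw [hexp, zpow_add₀ hqne, hsub, hB1, hwt']
  simp only [zpow_neg, zpow_natCast]
  set E1 := q ^ phiZ (zc α - zc γ) (zc β - zc γ)
  set E2 := q ^ phiZ (zc α - zc γ) (zc γ)
  have hPd' : (∏ x, qP q q (α x + β x - γ x)) ≠ 0 :=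
    Finset.prod_ne_zero_iff.2 fun i _ => nzq _
  field_simp [hPa, hPb, hPc, hPd', h1, h2', h3]
  rw [show mu ^ wt α = mu ^ (wt α - wt γ) * mu ^ wt γ by
    rw [← pow_add, Nat.sub_add_cancel hcle]]
  have hl1 : ∀ k : ℕ, lam ^ k * lam⁻¹ ^ k = 1 := fun k => by
    rw [← mul_pow, mul_inv_cancel₀ hlam, one_pow]
  linear_combination (qP q lam (wt γ) * mu ^ (wt α - wt γ) * mu ^ wt γ * mu ^ wt β * E1 * E2 *
    qP q (mu / lam) (wt α - wt γ) * ∏ i, qBinom q (α i) (γ i)) * (hl1 (wt β) - hl1 (wt γ))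
end
end

section
/- The stochastic R matrix elements satisfy S(λ,μ)^{γ,δ}_{α,β} = S(λ,μ)^{α',β'}_{γ',δ'} · (g̃_γ(λ) g̃_δ(μ))/(g̃_α(λ) g̃_β(μ)) · q^{φ(β,α)-φ(γ,δ)}, where α' denotes the reverse of the array α. -/
open scoped BigOperators

noncomputable section

/-- `g̃_α(μ) = g_α(μ) q^{-φ(α,α)}`. -/
def gtilde {n : ℕ} (q mu : ℝ) (α : Fin n → ℕ) : ℝ :=
  gfun q mu α * q ^ (-(phiZ (zc α) (zc α)))

/-- The stochastic R matrix element `S(λ,μ)^{γ,δ}_{α,β}`. -/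
def Smat {n : ℕ} (q lam mu : ℝ) (γ δ α β : Fin n → ℕ) : ℝ :=
  if γ + δ = α + β then Phi q lam mu γ β else 0

/-- `α' = (α_n,…,α_1)`, the reverse-ordered array. -/
def rev {n : ℕ} (α : Fin n → ℕ) : Fin n → ℕ := fun i => α i.rev


lemma qP_q_ne_zero {q : ℝ} (hq0 : 0 < q) (hq1 : q < 1) (m : ℕ) : qP q q m ≠ 0 := by
  unfold qP
  rw [Finset.prod_ne_zero_iff]
  intro j _
  have h1 : q ^ j ≤ 1 := pow_le_one₀ hq0.le hq1.le
  nlinarith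

lemma phiZ_add_left {n : ℕ} (a b c : Fin n → ℤ) :
    phiZ (a + b) c = phiZ a c + phiZ b c := by
  unfold phiZ
  rw [← Finset.sum_add_distrib]
  refine Finset.sum_congr rfl fun i _ => ?_
  rw [← Finset.sum_add_distrib]
  refine Finset.sum_congr rfl fun j _ => ?_
  by_cases hij : i < j <;> simp [hij, add_mul]

lemma phiZ_sub_left {n : ℕ} (a b c : Fin n → ℤ) :
    phiZ (a - b) c = phiZ a c - phiZ b c := by
  unfold phiZ
  rw [← Finset.sum_sub_distrib]
  refine Finset.sum_congr rfl fun i _ => ?_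
  rw [← Finset.sum_sub_distrib]
  refine Finset.sum_congr rfl fun j _ => ?_
  by_cases hij : i < j <;> simp [hij, sub_mul]

lemma phiZ_add_right_s3 {n : ℕ} (a b c : Fin n → ℤ) :
    phiZ a (b + c) = phiZ a b + phiZ a c := by
  unfold phiZ
  rw [← Finset.sum_add_distrib]
  refine Finset.sum_congr rfl fun i _ => ?_
  rw [← Finset.sum_add_distrib]
  refine Finset.sum_congr rfl fun j _ => ?_
  by_cases hij : i < j <;> simp [hij, mul_add]

lemma phiZ_sub_right {n : ℕ} (a b c : Fin n → ℤ) :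
    phiZ a (b - c) = phiZ a b - phiZ a c := by
  unfold phiZ
  rw [← Finset.sum_sub_distrib]
  refine Finset.sum_congr rfl fun i _ => ?_
  rw [← Finset.sum_sub_distrib]
  refine Finset.sum_congr rfl fun j _ => ?_
  by_cases hij : i < j <;> simp [hij, mul_sub]

lemma sum_rev {n : ℕ} {M : Type*} [AddCommMonoid M] (f : Fin n → M) :
    ∑ i : Fin n, f i.rev = ∑ i, f i :=
  Fintype.sum_equiv Fin.revPerm (fun i : Fin n => f i.rev) f (fun i => by simp)

lemma prod_rev {n : ℕ} (f : Fin n → ℝ) :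
    ∏ i : Fin n, f i.rev = ∏ i, f i :=
  Fintype.prod_equiv Fin.revPerm (fun i : Fin n => f i.rev) f (fun i => by simp)

lemma phiZ_rev {n : ℕ} (a b : Fin n → ℤ) :
    phiZ (fun i => a i.rev) (fun i => b i.rev) = phiZ b a := by
  unfold phiZ
  calc ∑ i : Fin n, ∑ j : Fin n, (if i < j then a i.rev * b j.rev else 0)
      = ∑ i : Fin n, ∑ j : Fin n, (if j.rev < i.rev then a i.rev * b j.rev else 0) := by
        simp [Fin.rev_lt_rev]
    _ = ∑ i : Fin n, ∑ j : Fin n, (if j < i then a i * b j else 0) := by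
        rw [← sum_rev (fun i => ∑ j, if j < i then a i * b j else 0)]
        refine Finset.sum_congr rfl fun i _ => ?_
        rw [← sum_rev (fun j => if j < i.rev then a i.rev * b j else 0)]
    _ = ∑ j : Fin n, ∑ i : Fin n, (if j < i then a i * b j else 0) := Finset.sum_comm
    _ = ∑ i : Fin n, ∑ j : Fin n, (if i < j then b i * a j else 0) := by
        refine Finset.sum_congr rfl fun i _ => Finset.sum_congr rfl fun j _ => ?_
        split_ifs <;> ring

lemma qBinom_key {q : ℝ} (hq0 : 0 < q) (hq1 : q < 1) (a b c d : ℕ) (h : c + d = a + b) :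
    qBinom q b c * qP q q c * qP q q d = qBinom q d a * qP q q a * qP q q b := by
  by_cases hcb : c ≤ b
  · have had : a ≤ d := by omega
    have hbc : b - c = d - a := by omega
    unfold qBinom
    rw [if_pos hcb, if_pos had, hbc]
    have h1 := qP_q_ne_zero hq0 hq1 c
    have h2 := qP_q_ne_zero hq0 hq1 a
    have h3 := qP_q_ne_zero hq0 hq1 (d - a)
    field_simp
  · have had : ¬ a ≤ d := by omega
    unfold qBinom
    rw [if_neg hcb, if_neg had]
    ring

/-- The symmetry (osr) of the stochastic R matrix:
`S(λ,μ)^{γ,δ}_{α,β} = S(λ,μ)^{α',β'}_{γ',δ'}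
  · (g̃_γ(λ) g̃_δ(μ))/(g̃_α(λ) g̃_β(μ)) · q^{φ(β,α)-φ(γ,δ)}`. -/
theorem Smat_reversal {n : ℕ} (q lam mu : ℝ) (hq0 : 0 < q) (hq1 : q < 1)
    (hlam : lam ≠ 0) (hmu : mu ≠ 0) (α β γ δ : Fin n → ℕ)
    (h1 : qP q lam (wt α) ≠ 0) (h2 : qP q mu (wt β) ≠ 0)
    (h3 : qP q mu (wt δ) ≠ 0) :
    Smat q lam mu γ δ α β
      = Smat q lam mu (rev α) (rev β) (rev γ) (rev δ) *
        (gtilde q lam γ * gtilde q mu δ / (gtilde q lam α * gtilde q mu β)) *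
        q ^ (phiZ (zc β) (zc α) - phiZ (zc γ) (zc δ)) := by
  have hqne : q ≠ 0 := ne_of_gt hq0
  by_cases h : γ + δ = α + β
  · have hpt : ∀ i, γ i + δ i = α i + β i := fun i => by simpa using congrFun h i
    have h' : rev α + rev β = rev γ + rev δ := by
      funext i
      simp only [Pi.add_apply, rev]
      have := hpt i.rev; omega
    simp only [Smat, if_pos h, if_pos h']
    by_cases hcb : ∀ i, γ i ≤ β i
    · have had : ∀ i, α i ≤ δ i := fun i => by have := hpt i; have := hcb i; omega
      have hCB : wt γ ≤ wt β := Finset.sum_le_sum fun i _ => hcb i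
      have hsum : wt γ + wt δ = wt α + wt β := by
        unfold wt
        rw [← Finset.sum_add_distrib, ← Finset.sum_add_distrib]
        exact Finset.sum_congr rfl fun i _ => hpt i
      obtain ⟨E, hB⟩ : ∃ E, wt β = wt γ + E := ⟨wt β - wt γ, by omega⟩
      have hD : wt δ = wt α + E := by omega
      have hwa : wt (rev α) = wt α := sum_rev α
      have hwd : wt (rev δ) = wt δ := sum_rev δ
      have hprev : (∏ i, qBinom q (rev δ i) (rev α i)) = ∏ i, qBinom q (δ i) (α i) :=
        prod_rev (fun i => qBinom q (δ i) (α i))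
      have hphirev : phiZ (zc (rev δ) - zc (rev α)) (zc (rev α)) = phiZ (zc α) (zc δ - zc α) :=
        phiZ_rev (zc δ - zc α) (zc α)
      have hdz : zc δ = zc α + zc β - zc γ := by
        funext i
        simp only [Pi.add_apply, Pi.sub_apply, zc]
        have := hpt i; omega
      have hFa : (∏ i, qP q q (α i)) ≠ 0 :=
        Finset.prod_ne_zero_iff.mpr fun i _ => qP_q_ne_zero hq0 hq1 _
      have hFb : (∏ i, qP q q (β i)) ≠ 0 :=
        Finset.prod_ne_zero_iff.mpr fun i _ => qP_q_ne_zero hq0 hq1 _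
      have hFc : (∏ i, qP q q (γ i)) ≠ 0 :=
        Finset.prod_ne_zero_iff.mpr fun i _ => qP_q_ne_zero hq0 hq1 _
      have hFd : (∏ i, qP q q (δ i)) ≠ 0 :=
        Finset.prod_ne_zero_iff.mpr fun i _ => qP_q_ne_zero hq0 hq1 _
      have hPD : (∏ i, qBinom q (δ i) (α i))
          = (∏ i, qBinom q (β i) (γ i)) * (∏ i, qP q q (γ i)) * (∏ i, qP q q (δ i))
            * (∏ i, qP q q (α i))⁻¹ * (∏ i, qP q q (β i))⁻¹ := by
        rw [eq_comm, mul_inv_eq_iff_eq_mul₀ hFb, mul_inv_eq_iff_eq_mul₀ hFa]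
        rw [← Finset.prod_mul_distrib, ← Finset.prod_mul_distrib,
            ← Finset.prod_mul_distrib, ← Finset.prod_mul_distrib]
        exact Finset.prod_congr rfl fun i _ =>
          (qBinom_key hq0 hq1 (α i) (β i) (γ i) (δ i) (hpt i)).trans (by ring)
      rw [hB] at h2
      rw [hD] at h3
      simp only [Phi, gtilde, gfun]
      rw [hwa, hwd, hprev, hphirev, hdz, hPD]
      simp only [phiZ_add_left, phiZ_add_right_s3, phiZ_sub_left, phiZ_sub_right]
      rw [hB, hD]
      simp only [Nat.add_sub_cancel_left]
      simp only [zpow_add₀ hqne, zpow_sub₀ hqne, zpow_neg, zpow_natCast, div_pow]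
      have Q1 : q ^ phiZ (zc α) (zc α) ≠ 0 := zpow_ne_zero _ hqne
      have Q2 : q ^ phiZ (zc α) (zc β) ≠ 0 := zpow_ne_zero _ hqne
      have Q3 : q ^ phiZ (zc α) (zc γ) ≠ 0 := zpow_ne_zero _ hqne
      have Q4 : q ^ phiZ (zc β) (zc α) ≠ 0 := zpow_ne_zero _ hqne
      have Q5 : q ^ phiZ (zc β) (zc β) ≠ 0 := zpow_ne_zero _ hqne
      have Q6 : q ^ phiZ (zc β) (zc γ) ≠ 0 := zpow_ne_zero _ hqne
      have Q7 : q ^ phiZ (zc γ) (zc α) ≠ 0 := zpow_ne_zero _ hqne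
      have Q8 : q ^ phiZ (zc γ) (zc β) ≠ 0 := zpow_ne_zero _ hqne
      have Q9 : q ^ phiZ (zc γ) (zc γ) ≠ 0 := zpow_ne_zero _ hqne
      field_simp
      ring
    · push_neg at hcb
      obtain ⟨i0, hi0⟩ := hcb
      have hL : (∏ i, qBinom q (β i) (γ i)) = 0 :=
        Finset.prod_eq_zero (Finset.mem_univ i0)
          (by unfold qBinom; rw [if_neg (by omega)])
      have hR : (∏ i, qBinom q (rev δ i) (rev α i)) = 0 := by
        refine Finset.prod_eq_zero (Finset.mem_univ i0.rev) ?_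
        have h5 := hpt i0
        unfold qBinom rev
        rw [Fin.rev_rev, if_neg (by omega)]
      unfold Phi
      rw [hL, hR]
      ring
  · have h' : ¬ (rev α + rev β = rev γ + rev δ) := by
      intro hc
      apply h
      funext i
      have := congrFun hc i.rev
      simp only [Pi.add_apply, rev, Fin.rev_rev] at this
      simp only [Pi.add_apply]
      omega
    simp [Smat, h, h']
end
end

section
/- The factorization property q^{φ(β,γ)} (g_β(μ) g_γ(λ)/g_{β+γ}(μ)) · S^{0,α}_{δ,β}(λ,μ) = S^{γ,α}_{δ,β+γ}(λ,μ) holds for all α,β,γ,δ ∈ Z_{≥0}^n with δ+α = 0+β (i.e. in the nonzero case). -/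
open scoped BigOperators

noncomputable section

/-- The factorization property (gkn):
`q^{φ(β,γ)} (g_β(μ) g_γ(λ)/g_{β+γ}(μ)) S^{0,α}_{δ,β}(λ,μ) = S^{γ,α}_{δ,β+γ}(λ,μ)`
in the nonzero case `δ + α = 0 + β`. -/
theorem Smat_factorization {n : ℕ} (q lam mu : ℝ) (hq0 : 0 < q) (hq1 : q < 1)
    (hlam : lam ≠ 0) (hmu : mu ≠ 0) (α β γ δ : Fin n → ℕ)
    (hcons : δ + α = (0 : Fin n → ℕ) + β)
    (h1 : qP q mu (wt β) ≠ 0) (h2 : qP q mu (wt (β + γ)) ≠ 0) :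
    q ^ (phiZ (zc β) (zc γ)) * (gfun q mu β * gfun q lam γ / gfun q mu (β + γ)) *
      Smat q lam mu 0 α δ β
      = Smat q lam mu γ α δ (β + γ) := by
  have hw : wt (β + γ) = wt β + wt γ := by
    simp [wt, Finset.sum_add_distrib]
  unfold Smat
  by_cases hc : α = δ + β
  · have c1 : (0 : Fin n → ℕ) + α = δ + β := by rw [zero_add, hc]
    have c2 : γ + α = δ + (β + γ) := by rw [hc]; funext i; simp; omega
    rw [if_pos c1, if_pos c2]
    have hphi : phiZ (zc (β + γ) - zc γ) (zc γ) = phiZ (zc β) (zc γ) := by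
      congr 1
      funext i
      simp [zc]
    have hwt0 : wt (0 : Fin n → ℕ) = 0 := by simp [wt]
    have hphi0 : phiZ (zc β - zc (0:Fin n → ℕ)) (zc (0:Fin n → ℕ)) = 0 := by
      simp [phiZ, zc]
    have hbin0 : ∀ i, qBinom q (β i) ((0:Fin n → ℕ) i) = 1 := by
      intro i
      simp only [qBinom, Pi.zero_apply, Nat.zero_le, if_true, Nat.sub_zero]
      rw [show qP q q 0 = 1 from by simp [qP], one_mul,
        div_self (qP_q_ne_zero hq0 hq1 (β i))]
    have hbin : ∀ i, qBinom q ((β + γ) i) (γ i) =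
        qP q q (β i + γ i) / (qP q q (γ i) * qP q q (β i)) := by
      intro i
      simp [qBinom, Pi.add_apply, Nat.le_add_left, Nat.add_sub_cancel]
    unfold Phi gfun
    rw [hphi, hphi0, hwt0, hw]
    simp only [hbin0, Finset.prod_const_one]
    rw [Finset.prod_congr rfl (fun i _ => hbin i)]
    rw [Finset.prod_div_distrib, Finset.prod_mul_distrib]
    have hq : ∀ m, qP q q m ≠ 0 := qP_q_ne_zero hq0 hq1
    have hB : (∏ i, qP q q (β i)) ≠ 0 :=
      Finset.prod_ne_zero_iff.mpr fun i _ => hq (β i)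
    have hC : (∏ i, qP q q (γ i)) ≠ 0 :=
      Finset.prod_ne_zero_iff.mpr fun i _ => hq (γ i)
    rw [hw] at h2
    set a := wt β
    set b := wt γ
    have e1 : mu ^ (-(a:ℤ)) = (mu ^ a)⁻¹ := by
      rw [zpow_neg, zpow_natCast]
    have e2 : lam ^ (-(b:ℤ)) = (lam ^ b)⁻¹ := by
      rw [zpow_neg, zpow_natCast]
    have e3 : mu ^ (-((a+b:ℕ):ℤ)) = (mu ^ a * mu ^ b)⁻¹ := by
      rw [zpow_neg, zpow_natCast, pow_add]
    rw [e1, e2, e3, Nat.sub_zero, Nat.add_sub_cancel]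
    have hqP0 : qP q lam 0 = 1 := by simp [qP]
    rw [hqP0]
    have hma : mu ^ a ≠ 0 := pow_ne_zero _ hmu
    have hmb : mu ^ b ≠ 0 := pow_ne_zero _ hmu
    have hlb : lam ^ b ≠ 0 := pow_ne_zero _ hlam
    rw [zpow_zero, pow_zero, div_pow]
    generalize qP q mu a = M1 at h1 ⊢
    generalize qP q mu (a + b) = M2 at h2 ⊢
    generalize (q : ℝ) ^ phiZ (zc β) (zc γ) = E
    generalize hBg : (∏ i, qP q q (β i)) = B at hB ⊢
    generalize hCg : (∏ i, qP q q (γ i)) = C at hC ⊢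
    generalize (∏ i, qP q q (β i + γ i)) = BC
    field_simp
  · have c1 : ¬ ((0 : Fin n → ℕ) + α = δ + β) := by rw [zero_add]; exact hc
    have c2 : ¬ (γ + α = δ + (β + γ)) := by
      intro h; apply hc; funext i
      have := congrFun h i
      simp only [Pi.add_apply] at this ⊢
      omega
    rw [if_neg c1, if_neg c2, mul_zero]
end
end

section
/- The function Φ_q satisfies the reversal identity Φ_q(γ|α; λ,μ) = q^{φ(α,γ)-φ(γ,α)} Φ_q(γ'|α'; λ,μ), where α' is the reverse-ordered array of α. -/
open scoped BigOperators

noncomputable section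

lemma wt_rev {n : ℕ} (α : Fin n → ℕ) : wt (rev α) = wt α := by
  unfold wt rev
  exact Fintype.sum_bijective Fin.rev Fin.rev_bijective _ _ (fun i => rfl)

/-- The reversal identity
`Φ_q(γ|α;λ,μ) = q^{φ(α,γ)-φ(γ,α)} Φ_q(γ'|α';λ,μ)`. -/
theorem Phi_reversal {n : ℕ} (q lam mu : ℝ) (hq : q ≠ 0)
    (γ α : Fin n → ℕ) :
    Phi q lam mu γ α
      = q ^ (phiZ (zc α) (zc γ) - phiZ (zc γ) (zc α)) *
          Phi q lam mu (rev γ) (rev α) := by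
  have hzc : ∀ (β : Fin n → ℕ), zc (rev β) = fun i => zc β i.rev := fun _ => rfl
  have hsub : (zc (rev α) - zc (rev γ)) = fun i => (zc α - zc γ) i.rev := by
    funext i; simp [hzc, Pi.sub_apply]
  have hphi : phiZ (zc (rev α) - zc (rev γ)) (zc (rev γ))
      = phiZ (zc γ) (zc α) - phiZ (zc γ) (zc γ) := by
    rw [hsub, hzc γ, phiZ_rev (zc α - zc γ) (zc γ), phiZ_sub_right]
  have hprod : (∏ i, qBinom q (rev α i) (rev γ i)) = ∏ i, qBinom q (α i) (γ i) :=
    Fintype.prod_bijective Fin.rev Fin.rev_bijective _ _ (fun i => rfl)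
  unfold Phi
  rw [hphi, hprod, wt_rev, wt_rev]
  have hexp : phiZ (zc α - zc γ) (zc γ)
      = (phiZ (zc α) (zc γ) - phiZ (zc γ) (zc α))
        + (phiZ (zc γ) (zc α) - phiZ (zc γ) (zc γ)) := by
    rw [phiZ_sub_left]; ring
  rw [hexp, zpow_add₀ hq]
  ring
end
end

section
/- In the q-boson algebra with relations k b_± = q^{±1} b_± k, b_+ b_- = 1 - k, b_- b_+ = 1 - q k, acting on the Fock space with b_+|m⟩=|m+1⟩, b_-|m⟩=(1-q^m)|m-1⟩, k|m⟩=q^m|m⟩ and trace Tr(X)=Σ_{m≥0}⟨m|X|m⟩/(q;q)_m with pairing ⟨m|m'⟩=δ_{m,m'}(q;q)_m, one has Tr(k^{m_2} b_-^{m_1} b_+^{m_1}) = (q;q)_{m_1}(q;q)_{m_2-1}/(q;q)_{m_1+m_2} for all m_1 ≥ 0 and m_2 ≥ 1. -/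
open scoped BigOperators

noncomputable section

/-- The Fock space `F = ⊕_{m≥0} ℂ|m⟩`, realized as coefficient sequences:
`v : ℕ → ℝ` stands for the vector `∑_m v m · |m⟩`. -/
abbrev Fock : Type := ℕ → ℝ

/-- The creation operator `b₊`, with `b₊|m⟩ = |m+1⟩`. -/
def Bp : Module.End ℝ Fock where
  toFun v := fun i => if i = 0 then 0 else v (i - 1)
  map_add' x y := by funext i; by_cases h : i = 0 <;> simp [h]
  map_smul' c x := by funext i; by_cases h : i = 0 <;> simp [h]

/-- The annihilation operator `b₋`, with `b₋|m⟩ = (1-q^m)|m-1⟩`. -/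
def Bm (q : ℝ) : Module.End ℝ Fock where
  toFun v := fun i => (1 - q ^ (i + 1)) * v (i + 1)
  map_add' x y := by funext i; simp [mul_add]
  map_smul' c x := by funext i; simp; ring

/-- The operator `k`, with `k|m⟩ = q^m|m⟩`. -/
def Kop (q : ℝ) : Module.End ℝ Fock where
  toFun v := fun i => q ^ i * v i
  map_add' x y := by funext i; simp [mul_add]
  map_smul' c x := by funext i; simp; ring

/-- The basis vector `|m⟩`. -/
def fock (m : ℕ) : Fock := fun i => if i = m then 1 else 0

/-- The trace `Tr(X) = ∑_{m≥0} ⟨m|X|m⟩/(q;q)_m`, with pairing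
`⟨m|m'⟩ = δ_{m,m'}(q;q)_m`; equivalently the sum of diagonal coefficients. -/
def Tr (X : Module.End ℝ Fock) : ℝ := ∑' m : ℕ, X (fock m) m

namespace TraceAux

variable {q : ℝ}

lemma fac_pos (hq0 : 0 < q) (hq1 : q < 1) (k : ℕ) (hk : 1 ≤ k) :
    0 < 1 - q ^ k := by
  have : q ^ k < 1 := pow_lt_one₀ hq0.le hq1 (by omega)
  linarith

lemma summ (hq0 : 0 < q) (hq1 : q < 1) (m1 n : ℕ) (hn : 1 ≤ n) :
    Summable (fun m : ℕ => q ^ (m * n) * ∏ j ∈ Finset.range m1, (1 - q ^ (m + 1 + j))) := by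
  have hgeo : Summable (fun m : ℕ => (q ^ n) ^ m) :=
    summable_geometric_of_lt_one (by positivity)
      (pow_lt_one₀ hq0.le hq1 (by omega))
  refine Summable.of_nonneg_of_le (fun m => ?_) (fun m => ?_) hgeo
  · have h0 : (0:ℝ) ≤ ∏ j ∈ Finset.range m1, (1 - q ^ (m + 1 + j)) :=
      Finset.prod_nonneg fun j _ => (fac_pos hq0 hq1 _ (by omega)).le
    positivity
  · have h1 : ∏ j ∈ Finset.range m1, (1 - q ^ (m + 1 + j)) ≤ 1 := by
      refine Finset.prod_le_one (fun j _ => (fac_pos hq0 hq1 _ (by omega)).le)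
        (fun j _ => by
          have : (0:ℝ) < q ^ (m + 1 + j) := by positivity
          linarith)
    calc q ^ (m * n) * ∏ j ∈ Finset.range m1, (1 - q ^ (m + 1 + j))
        ≤ q ^ (m * n) * 1 := by
          refine mul_le_mul_of_nonneg_left h1 (by positivity)
      _ = (q ^ n) ^ m := by rw [mul_one, ← pow_mul, mul_comm]

lemma key (hq0 : 0 < q) (hq1 : q < 1) (m1 : ℕ) :
    ∀ n : ℕ, 1 ≤ n →
      ∑' m : ℕ, q ^ (m * n) * ∏ j ∈ Finset.range m1, (1 - q ^ (m + 1 + j))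
        = (∏ j ∈ Finset.range m1, (1 - q ^ (1 + j)))
            / ∏ j ∈ Finset.range (m1 + 1), (1 - q ^ (n + j)) := by
  induction m1 with
  | zero =>
    intro n hn
    simp only [Finset.range_zero, Finset.prod_empty, mul_one]
    have h : ∑' m : ℕ, q ^ (m * n) = ∑' m : ℕ, (q ^ n) ^ m := by
      refine tsum_congr fun m => by rw [← pow_mul, mul_comm]
    rw [h, tsum_geometric_of_lt_one (by positivity) (pow_lt_one₀ hq0.le hq1 (by omega))]
    simp [one_div]
  | succ k ih =>
    intro n hn
    have hsplit : ∀ m : ℕ,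
        q ^ (m * n) * ∏ j ∈ Finset.range (k + 1), (1 - q ^ (m + 1 + j))
          = q ^ (m * n) * ∏ j ∈ Finset.range k, (1 - q ^ (m + 1 + j))
            - q ^ (k + 1) * (q ^ (m * (n + 1)) * ∏ j ∈ Finset.range k, (1 - q ^ (m + 1 + j))) := by
      intro m
      rw [Finset.prod_range_succ, show m + 1 + k = m + (k + 1) by omega, pow_add,
        show m * (n + 1) = m * n + m by ring, pow_add]
      ring
    rw [tsum_congr hsplit,
      Summable.tsum_sub (summ hq0 hq1 k n hn) ((summ hq0 hq1 k (n + 1) (by omega)).mul_left _),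
      tsum_mul_left, ih n hn, ih (n + 1) (by omega)]
    set A := ∏ j ∈ Finset.range k, (1 - q ^ (1 + j)) with hA
    set D := ∏ j ∈ Finset.range k, (1 - q ^ (n + 1 + j)) with hD
    have hDpos : 0 < D := Finset.prod_pos fun j _ => fac_pos hq0 hq1 _ (by omega)
    have e1 : ∏ j ∈ Finset.range (k + 1), (1 - q ^ (n + j)) = (1 - q ^ n) * D := by
      rw [Finset.prod_range_succ']
      simp only [add_zero]
      rw [mul_comm]
      congr 1
      exact Finset.prod_congr rfl fun j _ => by rw [show n + (j + 1) = n + 1 + j by omega]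
    have e2 : ∏ j ∈ Finset.range (k + 1), (1 - q ^ (n + 1 + j)) = D * (1 - q ^ (n + 1 + k)) :=
      Finset.prod_range_succ _ _
    have e3 : ∏ j ∈ Finset.range (k + 2), (1 - q ^ (n + j))
        = (1 - q ^ n) * D * (1 - q ^ (n + 1 + k)) := by
      rw [Finset.prod_range_succ, e1, show n + (k + 1) = n + 1 + k by omega]
    have e4 : ∏ j ∈ Finset.range (k + 1), (1 - q ^ (1 + j)) = A * (1 - q ^ (k + 1)) := by
      rw [Finset.prod_range_succ, show 1 + k = k + 1 by omega]
    rw [e1, e2, e3, e4]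
    have h1 : (1 - q ^ n) ≠ 0 := (fac_pos hq0 hq1 _ (by omega)).ne'
    have h2 : D ≠ 0 := hDpos.ne'
    have h3 : (1 - q ^ (n + 1 + k)) ≠ 0 := (fac_pos hq0 hq1 _ (by omega)).ne'
    field_simp
    ring

lemma bp_fock (m : ℕ) : Bp (fock m) = fock (m + 1) := by
  funext i
  cases i with
  | zero => simp [Bp, fock]
  | succ n => simp [Bp, fock]

lemma bp_pow_fock (m1 : ℕ) : ∀ m, (Bp ^ m1) (fock m) = fock (m + m1) := by
  induction m1 with
  | zero => intro m; simp
  | succ k ih =>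
    intro m
    rw [pow_succ', Module.End.mul_apply, ih, bp_fock, show m + k + 1 = m + (k + 1) by omega]

lemma bm_fock (m : ℕ) : Bm q (fock (m + 1)) = (1 - q ^ (m + 1)) • fock m := by
  funext i
  simp only [Bm, LinearMap.coe_mk, AddHom.coe_mk, fock, Pi.smul_apply, smul_eq_mul]
  by_cases h : i = m
  · simp [h]
  · simp [h, fun hh : i + 1 = m + 1 => h (by omega)]

lemma bm_pow_fock (q : ℝ) (m1 : ℕ) : ∀ m, ((Bm q) ^ m1) (fock (m + m1))
    = (∏ j ∈ Finset.range m1, (1 - q ^ (m + 1 + j))) • fock m := by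
  induction m1 with
  | zero => intro m; simp
  | succ k ih =>
    intro m
    rw [pow_succ, Module.End.mul_apply, show m + (k + 1) = (m + k) + 1 by omega,
      bm_fock, map_smul, ih, Finset.prod_range_succ, smul_smul,
      show m + 1 + k = m + k + 1 by omega, mul_comm]

lemma k_fock (m : ℕ) : Kop q (fock m) = (q ^ m) • fock m := by
  funext i
  simp only [Kop, LinearMap.coe_mk, AddHom.coe_mk, fock, Pi.smul_apply, smul_eq_mul]
  by_cases h : i = m <;> simp [h]

lemma k_pow_fock (m2 m : ℕ) : ((Kop q) ^ m2) (fock m) = (q ^ (m * m2)) • fock m := by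
  induction m2 with
  | zero => simp
  | succ k ih =>
    rw [pow_succ', Module.End.mul_apply, ih, map_smul, k_fock, smul_smul, ← pow_add,
      show m * k + m = m * (k + 1) by ring]

lemma diag (q : ℝ) (m1 m2 m : ℕ) :
    (((Kop q) ^ m2 * (Bm q) ^ m1 * Bp ^ m1) (fock m)) m
      = q ^ (m * m2) * ∏ j ∈ Finset.range m1, (1 - q ^ (m + 1 + j)) := by
  rw [Module.End.mul_apply, Module.End.mul_apply, bp_pow_fock, bm_pow_fock, map_smul,
    k_pow_fock]
  simp [fock, mul_comm]

end TraceAux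

open TraceAux in
/-- The trace formula (utk):
`Tr(k^{m₂} b₋^{m₁} b₊^{m₁}) = (q;q)_{m₁}(q;q)_{m₂-1}/(q;q)_{m₁+m₂}`
for `m₁ ≥ 0`, `m₂ ≥ 1`. -/
theorem trace_formula (q : ℝ) (hq0 : 0 < q) (hq1 : q < 1)
    (m1 m2 : ℕ) (hm2 : 1 ≤ m2) :
    Tr ((Kop q) ^ m2 * (Bm q) ^ m1 * Bp ^ m1)
      = qP q q m1 * qP q q (m2 - 1) / qP q q (m1 + m2) := by
  have hTr : Tr ((Kop q) ^ m2 * (Bm q) ^ m1 * Bp ^ m1)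
      = ∑' m : ℕ, q ^ (m * m2) * ∏ j ∈ Finset.range m1, (1 - q ^ (m + 1 + j)) :=
    tsum_congr fun m => diag q m1 m2 m
  rw [hTr, key hq0 hq1 m1 m2 hm2]
  have hqP : qP q q m1 = ∏ j ∈ Finset.range m1, (1 - q ^ (1 + j)) := by
    refine Finset.prod_congr rfl fun j _ => ?_
    rw [← pow_succ', show j + 1 = 1 + j by omega]
  have hsplit : qP q q (m1 + m2)
      = qP q q (m2 - 1) * ∏ j ∈ Finset.range (m1 + 1), (1 - q ^ (m2 + j)) := by
    unfold qP
    rw [show m1 + m2 = (m2 - 1) + (m1 + 1) by omega, Finset.prod_range_add]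
    congr 1
    refine Finset.prod_congr rfl fun j _ => ?_
    rw [← pow_succ', show m2 - 1 + j + 1 = m2 + j by omega]
  have hQ : qP q q (m2 - 1) ≠ 0 := by
    refine (Finset.prod_pos fun j _ => ?_).ne'
    have : q * q ^ j = q ^ (j + 1) := (pow_succ' q j).symm
    rw [this]
    exact fac_pos hq0 hq1 _ (by omega)
  have hP : (∏ j ∈ Finset.range (m1 + 1), (1 - q ^ (m2 + j))) ≠ 0 :=
    (Finset.prod_pos fun j _ => fac_pos hq0 hq1 _ (by omega)).ne'
  rw [hqP, hsplit]
  field_simp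
end
end

section
/- (Lemma 4.4) In the q-boson algebra, with Y = b_- + k, for every m ≥ 0: (b_+;q)_m b_-^m = (-1)^m q^{m(m-1)/2} Σ_{s=0}^m μ^{m-s} binom_q(m,s) (μ;q)_s (μ^{-1}q^{1-m}Y;q)_{m-s}, where (X;q)_r = ∏_{j=0}^{r-1}(1 - X q^j) with operator argument X. -/
open scoped BigOperators

noncomputable section

/-- Operator q-Pochhammer `(X;q)_r = ∏_{j=0}^{r-1}(1 - q^j X)`
(the factors commute). -/
def opPoch (q : ℝ) (X : Module.End ℝ Fock) : ℕ → Module.End ℝ Fock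
  | 0 => 1
  | r + 1 => opPoch q X r * (1 - (q ^ r) • X)

namespace HRK
open Polynomial

/-- polynomial q-Pochhammer with scalar `c`: `∏ (1 - c q^j X)` -/
def pp (q c : ℝ) : ℕ → Polynomial ℝ
  | 0 => 1
  | r + 1 => pp q c r * (1 - C (c * q ^ r) * X)

lemma pp_eq_prod (q c : ℝ) (m : ℕ) :
    pp q c m = ∏ j ∈ Finset.range m, (1 - C (c * q ^ j) * X) := by
  induction m with
  | zero => simp [pp]
  | succ r ih => rw [pp, ih, Finset.prod_range_succ]

/-- ascending product `∏ (X - q^i)` -/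
def Qa (q : ℝ) : ℕ → Polynomial ℝ
  | 0 => 1
  | r + 1 => Qa q r * (X - C (q ^ r))

lemma Qa_eq_prod (q : ℝ) (m : ℕ) :
    Qa q m = ∏ j ∈ Finset.range m, (X - C (q ^ j)) := by
  induction m with
  | zero => simp [Qa]
  | succ r ih => rw [Qa, ih, Finset.prod_range_succ]

lemma qP_pos {q : ℝ} (hq0 : 0 < q) (hq1 : q < 1) (k : ℕ) : 0 < qP q q k := by
  unfold qP
  apply Finset.prod_pos
  intro j _
  have h1 : q * q ^ j ≤ q := by
    nlinarith [pow_le_one₀ (le_of_lt hq0) (le_of_lt hq1) (n := j), pow_pos hq0 j]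
  linarith

lemma qP_succ (q z : ℝ) (k : ℕ) : qP q z (k + 1) = qP q z k * (1 - z * q ^ k) := by
  simp [qP, Finset.prod_range_succ]

lemma qP_ne {q : ℝ} (hq0 : 0 < q) (hq1 : q < 1) (k : ℕ) : qP q q k ≠ 0 :=
  (qP_pos hq0 hq1 k).ne'

lemma qBinom_zero {q : ℝ} (hq0 : 0 < q) (hq1 : q < 1) (m : ℕ) : qBinom q m 0 = 1 := by
  have h : qP q q 0 = 1 := by simp [qP]
  simp [qBinom, h, div_self (qP_ne hq0 hq1 m)]

lemma qBinom_self {q : ℝ} (hq0 : 0 < q) (hq1 : q < 1) (m : ℕ) : qBinom q m m = 1 := by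
  have h : qP q q 0 = 1 := by simp [qP]
  simp [qBinom, h, div_self (qP_ne hq0 hq1 m)]

lemma qBinom_overflow (q : ℝ) {m k : ℕ} (h : m < k) : qBinom q m k = 0 := by
  simp [qBinom, Nat.not_le.mpr h]

/-- q-Pascal: `[m+1, s+1] = q^(s+1) [m, s+1] + [m, s]`. -/
lemma qBinom_pascal {q : ℝ} (hq0 : 0 < q) (hq1 : q < 1) (m s : ℕ) :
    qBinom q (m + 1) (s + 1) = q ^ (s + 1) * qBinom q m (s + 1) + qBinom q m s := by
  rcases lt_or_ge m s with h | hsm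
  · rw [qBinom_overflow q (by omega), qBinom_overflow q (by omega),
      qBinom_overflow q (by omega)]
    ring
  rcases eq_or_lt_of_le hsm with rfl | hlt
  · rw [qBinom_self hq0 hq1, qBinom_overflow q (Nat.lt_succ_self s),
      qBinom_self hq0 hq1]
    ring
  · -- s + 1 ≤ m
    have hs1m : s + 1 ≤ m := hlt
    obtain ⟨d, rfl⟩ : ∃ d, m = s + 1 + d := ⟨m - (s+1), by omega⟩
    simp only [qBinom, if_pos (by omega : s + 1 ≤ s + 1 + d + 1),
      if_pos (by omega : s + 1 ≤ s + 1 + d), if_pos (by omega : s ≤ s + 1 + d)]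
    have e1 : s + 1 + d + 1 - (s + 1) = d + 1 := by omega
    have e2 : s + 1 + d - (s + 1) = d := by omega
    have e3 : s + 1 + d - s = d + 1 := by omega
    rw [e1, e2, e3]
    have pm : qP q q (s + 1 + d + 1) = qP q q (s + 1 + d) * (1 - q * q ^ (s + 1 + d)) :=
      qP_succ q q _
    have ps : qP q q (s + 1) = qP q q s * (1 - q * q ^ s) := qP_succ q q _
    have pd : qP q q (d + 1) = qP q q d * (1 - q * q ^ d) := qP_succ q q _
    have h1 := qP_ne hq0 hq1 (s+1)
    have h2 := qP_ne hq0 hq1 d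
    have h3 := qP_ne hq0 hq1 (d+1)
    have h4 := qP_ne hq0 hq1 s
    have h5 := qP_ne hq0 hq1 (s+1+d)
    have h6 : (1 : ℝ) - q * q ^ s ≠ 0 := by
      have := qP_ne hq0 hq1 (s+1); rw [qP_succ] at this
      exact right_ne_zero_of_mul this
    have h7 : (1 : ℝ) - q * q ^ d ≠ 0 := by
      have := qP_ne hq0 hq1 (d+1); rw [qP_succ] at this
      exact right_ne_zero_of_mul this
    rw [pm, ps, pd]
    field_simp
    ring

lemma pp_succ (q c : ℝ) (r : ℕ) : pp q c (r+1) = pp q c r * (1 - C (c * q ^ r) * X) := rfl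

/-- q-Vandermonde for polynomials: `∑ₛ a^(m-s) [m,s] (a;q)ₛ (bX;q)_{m-s} = (abX;q)_m`. -/
lemma vdm {q : ℝ} (hq0 : 0 < q) (hq1 : q < 1) (a b : ℝ) (m : ℕ) :
    ∑ s ∈ Finset.range (m + 1),
        C (a ^ (m - s) * qBinom q m s * qP q a s) * pp q b (m - s)
      = pp q (a * b) m := by
  induction m with
  | zero =>
    have h0 : qP q a 0 = 1 := by simp [qP]
    simp [pp, qBinom_zero hq0 hq1, h0]
  | succ m ih =>
    have step1 : ∑ s ∈ Finset.range (m + 2),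
        C (a ^ (m + 1 - s) * qBinom q (m + 1) s * qP q a s) * pp q b (m + 1 - s)
        = (∑ t ∈ Finset.range (m + 1),
            (C (a ^ (m + 1 - (t+1)) * (q ^ (t+1) * qBinom q m (t+1)) * qP q a (t+1)) *
                pp q b (m + 1 - (t+1))
             + C (a ^ (m - t) * qBinom q m t * qP q a (t + 1)) * pp q b (m - t)))
          + C (a ^ (m + 1 - 0) * (q ^ 0 * qBinom q m 0) * qP q a 0) * pp q b (m + 1 - 0) := by
      rw [Finset.sum_range_succ']
      congr 1
      · apply Finset.sum_congr rfl
        intro t _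
        have e : m + 1 - (t + 1) = m - t := by omega
        rw [qBinom_pascal hq0 hq1, e]
        simp only [map_mul, map_add, map_pow]
        ring
      · rw [qBinom_zero hq0 hq1, qBinom_zero hq0 hq1]
        norm_num
    rw [step1, Finset.sum_add_distrib]
    rw [show (∑ t ∈ Finset.range (m + 1),
            C (a ^ (m + 1 - (t+1)) * (q ^ (t+1) * qBinom q m (t+1)) * qP q a (t+1)) *
                pp q b (m + 1 - (t+1)))
          + (∑ t ∈ Finset.range (m + 1),
              C (a ^ (m - t) * qBinom q m t * qP q a (t + 1)) * pp q b (m - t))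
          + C (a ^ (m + 1 - 0) * (q ^ 0 * qBinom q m 0) * qP q a 0) * pp q b (m + 1 - 0)
        = (∑ s ∈ Finset.range (m + 2),
            C (a ^ (m + 1 - s) * (q ^ s * qBinom q m s) * qP q a s) * pp q b (m + 1 - s))
          + (∑ t ∈ Finset.range (m + 1),
              C (a ^ (m - t) * qBinom q m t * qP q a (t + 1)) * pp q b (m - t)) from by
        conv_rhs => rw [Finset.sum_range_succ']
        abel]
    rw [Finset.sum_range_succ, qBinom_overflow q (Nat.lt_succ_self m)]
    have hz : C (a ^ (m + 1 - (m+1)) * (q ^ (m+1) * (0:ℝ)) * qP q a (m+1)) *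
        pp q b (m + 1 - (m+1)) = 0 := by simp
    rw [hz, add_zero, ← Finset.sum_add_distrib]
    have step2 : ∑ s ∈ Finset.range (m + 1),
        (C (a ^ (m + 1 - s) * (q ^ s * qBinom q m s) * qP q a s) * pp q b (m + 1 - s)
         + C (a ^ (m - s) * qBinom q m s * qP q a (s + 1)) * pp q b (m - s))
        = ∑ s ∈ Finset.range (m + 1),
            (C (a ^ (m - s) * qBinom q m s * qP q a s) * pp q b (m - s))
              * (1 - C (a * b * q ^ m) * X) := by
      apply Finset.sum_congr rfl
      intro s hs
      have hsm : s ≤ m := by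
        have := Finset.mem_range.mp hs; omega
      obtain ⟨d, rfl⟩ : ∃ d, m = s + d := ⟨m - s, by omega⟩
      have e1 : s + d + 1 - s = d + 1 := by omega
      have e2 : s + d - s = d := by omega
      rw [e1, e2, pp_succ, qP_succ]
      have e3 : q ^ (s + d) = q ^ s * q ^ d := by ring
      rw [e3]
      simp only [map_mul, map_sub, map_pow, map_one]
      ring
    rw [step2, ← Finset.sum_mul, ih, pp_succ]


lemma key_poly {q : ℝ} (hq0 : 0 < q) (m : ℕ) :
    C ((-1 : ℝ) ^ m * q ^ (m * (m - 1) / 2)) * pp q (q ^ ((1 : ℤ) - (m : ℤ))) m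
      = Qa q m := by
  have hqne : q ≠ 0 := hq0.ne'
  have hscalar : ((-1 : ℝ)) ^ m * q ^ (m * (m - 1) / 2)
      = ∏ j ∈ Finset.range m, (-(q ^ (m - 1 - j))) := by
    rw [Finset.prod_range_reflect (fun j => -(q ^ j)) m,
      Finset.prod_congr rfl (fun j _ => (neg_eq_neg_one_mul (q ^ j))),
      Finset.prod_mul_distrib, Finset.prod_const, Finset.card_range,
      Finset.prod_pow_eq_pow_sum, Finset.sum_range_id]
  rw [hscalar, map_prod, pp_eq_prod, Qa_eq_prod, ← Finset.prod_mul_distrib,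
    ← Finset.prod_range_reflect (fun j => X - C (q ^ j)) m]
  apply Finset.prod_congr rfl
  intro j hj
  have hjm : j < m := Finset.mem_range.mp hj
  have hone : q ^ (m - 1 - j) * (q ^ ((1 : ℤ) - (m : ℤ)) * q ^ j) = 1 := by
    rw [← zpow_natCast q (m - 1 - j), ← zpow_natCast q j, ← zpow_add₀ hqne,
      ← zpow_add₀ hqne]
    rw [show ((m - 1 - j : ℕ) : ℤ) + (1 - (m : ℤ) + (j : ℕ)) = 0 by
      omega]
    exact zpow_zero q
  rw [map_neg]
  calc -C (q ^ (m - 1 - j)) * (1 - C (q ^ ((1 : ℤ) - (m : ℤ)) * q ^ j) * X)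
      = C (q ^ (m - 1 - j) * (q ^ ((1 : ℤ) - (m : ℤ)) * q ^ j)) * X
          - C (q ^ (m - 1 - j)) := by simp only [map_mul]; ring
    _ = X - C (q ^ (m - 1 - j)) := by rw [hone, map_one, one_mul]

/-! ### Operator side -/

lemma bp_bm (q : ℝ) : Bp * Bm q = 1 - Kop q := by
  apply LinearMap.ext
  intro v
  funext i
  cases i with
  | zero => simp [Module.End.mul_apply, Bp, Bm, Kop]
  | succ n =>
    simp [Module.End.mul_apply, Bp, Bm, Kop]
    ring

lemma bm_k (q : ℝ) : Bm q * Kop q = q • (Kop q * Bm q) := by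
  apply LinearMap.ext
  intro v
  funext i
  simp [Module.End.mul_apply, Bm, Kop]
  ring

lemma bm_pow_k (q : ℝ) (r : ℕ) :
    (Bm q) ^ r * Kop q = (q ^ r) • (Kop q * (Bm q) ^ r) := by
  induction r with
  | zero => simp
  | succ r ih =>
    rw [pow_succ', mul_assoc, ih, mul_smul_comm, ← mul_assoc, bm_k, smul_mul_assoc,
      smul_smul, mul_assoc, ← pow_succ']
    rw [pow_succ q r, mul_comm (q ^ r) q]

/-- The product `∏_{i<m} (Y - q^i)` as an endomorphism. -/
def Pprod (q : ℝ) : ℕ → Module.End ℝ Fock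
  | 0 => 1
  | r + 1 => Pprod q r * (Bm q + Kop q - (q ^ r : ℝ) • 1)

lemma core (q : ℝ) (m : ℕ) :
    opPoch q Bp m * (Bm q) ^ m = Pprod q m := by
  induction m with
  | zero => simp [opPoch, Pprod]
  | succ r ih =>
    have key : (1 - (q ^ r : ℝ) • Bp) * (Bm q) ^ (r + 1)
        = (Bm q) ^ r * (Bm q + Kop q - (q ^ r : ℝ) • 1) := by
      have e1 : (Bm q) ^ r * (Bm q + Kop q - (q ^ r : ℝ) • 1)
          = Bm q ^ (r + 1) + (q ^ r : ℝ) • (Kop q * Bm q ^ r)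
            - (q ^ r : ℝ) • (Bm q ^ r) := by
        rw [mul_sub, mul_add, bm_pow_k, mul_smul_comm, mul_one, ← pow_succ]
      have e2 : (1 - (q ^ r : ℝ) • Bp) * Bm q ^ (r + 1)
          = Bm q ^ (r + 1) - (q ^ r : ℝ) • ((1 - Kop q) * Bm q ^ r) := by
        rw [sub_mul, one_mul, smul_mul_assoc, pow_succ' (Bm q) r, ← mul_assoc, bp_bm]
      rw [e2, e1, sub_mul, one_mul, smul_sub]
      abel
    show opPoch q Bp r * (1 - (q ^ r : ℝ) • Bp) * (Bm q) ^ (r + 1) = _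
    rw [mul_assoc, key, ← mul_assoc, ih]
    rfl

/-- Evaluating the polynomial Pochhammer at `Y` gives `opPoch` of `c • Y`. -/
lemma aeval_pp (q c : ℝ) (Y : Module.End ℝ Fock) (r : ℕ) :
    Polynomial.aeval Y (pp q c r) = opPoch q (c • Y) r := by
  induction r with
  | zero => simp [pp, opPoch]
  | succ r ih =>
    rw [pp_succ, map_mul, ih]
    show _ = opPoch q (c • Y) r * (1 - (q ^ r : ℝ) • (c • Y))
    congr 1
    rw [map_sub, map_one, map_mul, Polynomial.aeval_C, Polynomial.aeval_X,
      smul_smul, mul_comm (q ^ r) c, ← Algebra.smul_def]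

lemma aeval_Qa (q : ℝ) (m : ℕ) :
    Polynomial.aeval (Bm q + Kop q) (Qa q m) = Pprod q m := by
  induction m with
  | zero => simp [Qa, Pprod]
  | succ r ih =>
    show Polynomial.aeval (Bm q + Kop q) (Qa q r * (X - C (q ^ r))) = _
    rw [map_mul, ih, map_sub, Polynomial.aeval_X, Polynomial.aeval_C,
      Algebra.algebraMap_eq_smul_one]
    rfl

end HRK

open Polynomial in
/-- Lemma 4.4: with `Y = b₋ + k`, for every `m ≥ 0`,
`(b₊;q)_m b₋^m = (-1)^m q^{m(m-1)/2}
  ∑_{s=0}^m μ^{m-s} binom_q(m,s) (μ;q)_s (μ^{-1}q^{1-m}Y;q)_{m-s}`. -/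
theorem lemma_hrk (q μ : ℝ) (hq0 : 0 < q) (hq1 : q < 1) (hμ : μ ≠ 0)
    (m : ℕ) :
    opPoch q Bp m * (Bm q) ^ m
      = ((-1 : ℝ) ^ m * q ^ (m * (m - 1) / 2)) •
          ∑ s ∈ Finset.range (m + 1),
            (μ ^ (m - s) * qBinom q m s * qP q μ s) •
              opPoch q ((μ⁻¹ * q ^ (1 - (m : ℤ))) • (Bm q + Kop q)) (m - s) := by
  have hsum : ∑ s ∈ Finset.range (m + 1),
      (μ ^ (m - s) * qBinom q m s * qP q μ s) •
        opPoch q ((μ⁻¹ * q ^ (1 - (m : ℤ))) • (Bm q + Kop q)) (m - s)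
      = Polynomial.aeval (Bm q + Kop q)
          (∑ s ∈ Finset.range (m + 1),
            C (μ ^ (m - s) * qBinom q m s * qP q μ s) *
              HRK.pp q (μ⁻¹ * q ^ (1 - (m : ℤ))) (m - s)) := by
    rw [map_sum]
    apply Finset.sum_congr rfl
    intro s _
    rw [← HRK.aeval_pp, ← map_smul, Polynomial.smul_eq_C_mul]
  rw [hsum, HRK.vdm hq0 hq1 μ (μ⁻¹ * q ^ (1 - (m : ℤ))) m,
    show μ * (μ⁻¹ * q ^ (1 - (m : ℤ))) = q ^ ((1 : ℤ) - (m : ℤ)) by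
      rw [← mul_assoc, mul_inv_cancel₀ hμ, one_mul],
    ← map_smul, Polynomial.smul_eq_C_mul, HRK.key_poly hq0, HRK.aeval_Qa,
    HRK.core]
end
end

section
/- In the q-boson algebra, the identity (b_+ - q^{-n+1}) b_-^n = b_-^{n-1}(1 - q^{-n+1}(b_-+k)) holds for every n ≥ 1, and consequently (b_+ - 1)(b_+ - q^{-1})⋯(b_+ - q^{1-m}) b_-^m = (q^{1-m}Y;q)_m with Y = b_- + k. -/
open scoped BigOperators

noncomputable section

/-- The ordered product `(b₊ - 1)(b₊ - q^{-1})⋯(b₊ - q^{1-m})`. -/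
def lFact (q : ℝ) : ℕ → Module.End ℝ Fock
  | 0 => 1
  | m + 1 => lFact q m * (Bp - (q ^ (-(m : ℤ))) • (1 : Module.End ℝ Fock))

lemma Bp_mul_Bm (q : ℝ) : Bp * Bm q = 1 - Kop q := by
  apply LinearMap.ext; intro v; funext i
  simp [Bp, Bm, Kop, Module.End.mul_apply, LinearMap.sub_apply, Module.End.one_apply]
  cases i <;> simp <;> ring

lemma Bm_mul_Kop (q : ℝ) : Bm q * Kop q = q • (Kop q * Bm q) := by
  apply LinearMap.ext; intro v; funext i
  simp [Bm, Kop, Module.End.mul_apply, LinearMap.smul_apply, Pi.smul_apply]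
  ring

lemma Bm_pow_mul_Kop (q : ℝ) (m : ℕ) :
    (Bm q) ^ m * Kop q = (q ^ m) • (Kop q * (Bm q) ^ m) := by
  induction m with
  | zero => simp
  | succ s ih =>
      have : (Bm q) ^ (s + 1) * Kop q = (Bm q) ^ s * (Bm q * Kop q) := by
        rw [pow_succ, mul_assoc]
      rw [this, Bm_mul_Kop, mul_smul_comm, ← mul_assoc, ih, smul_mul_assoc,
        smul_smul, mul_assoc, ← pow_succ, pow_succ']
      rw [← pow_succ']

/-- single-factor commutation in the commutative subalgebra generated by `Y`. -/
lemma factor_comm (Y : Module.End ℝ Fock) (a b : ℝ) :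
    (1 - a • Y) * (1 - b • Y) = (1 - b • Y) * (1 - a • Y) := by
  simp only [mul_sub, sub_mul, one_mul, mul_one, smul_mul_assoc, mul_smul_comm,
    smul_smul]
  module

lemma opPoch_comm (q : ℝ) (Y : Module.End ℝ Fock) (c b : ℝ) (r : ℕ) :
    opPoch q (c • Y) r * (1 - b • Y) = (1 - b • Y) * opPoch q (c • Y) r := by
  induction r with
  | zero => simp [opPoch]
  | succ s ih =>
      rw [opPoch, smul_smul, mul_assoc, factor_comm, ← mul_assoc, ih, mul_assoc]

lemma opPoch_pull (q : ℝ) (Y : Module.End ℝ Fock) (c : ℝ) (r : ℕ) :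
    opPoch q (c • Y) (r + 1) = (1 - c • Y) * opPoch q ((q * c) • Y) r := by
  induction r with
  | zero => simp [opPoch]
  | succ s ih =>
      rw [opPoch, ih, mul_assoc]
      congr 1
      rw [opPoch]
      congr 1
      rw [smul_smul, smul_smul]
      ring_nf

/-- In the q-boson algebra, `(b₊ - q^{-n+1}) b₋^n = b₋^{n-1}(1 - q^{-n+1}(b₋+k))`
for every `n ≥ 1`, and consequently
`(b₊-1)(b₊-q^{-1})⋯(b₊-q^{1-m}) b₋^m = (q^{1-m}Y;q)_m` with `Y = b₋ + k`. -/
theorem bplus_bminus_identity (q : ℝ) (hq : q ≠ 0) :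
    (∀ n : ℕ, 1 ≤ n →
      (Bp - (q ^ (1 - (n : ℤ))) • (1 : Module.End ℝ Fock)) * (Bm q) ^ n
        = (Bm q) ^ (n - 1) *
            (1 - (q ^ (1 - (n : ℤ))) • (Bm q + Kop q))) ∧
    (∀ m : ℕ,
      lFact q m * (Bm q) ^ m
        = opPoch q ((q ^ (1 - (m : ℤ))) • (Bm q + Kop q)) m) := by
  have key : ∀ s : ℕ,
      (Bp - (q ^ (-(s : ℤ))) • (1 : Module.End ℝ Fock)) * (Bm q) ^ (s + 1)
        = (Bm q) ^ s * (1 - (q ^ (-(s : ℤ))) • (Bm q + Kop q)) := by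
    intro s
    set c : ℝ := q ^ (-(s : ℤ)) with hc
    have hKB : Kop q * (Bm q) ^ s = c • ((Bm q) ^ s * Kop q) := by
      rw [Bm_pow_mul_Kop, smul_smul, hc, zpow_neg, zpow_natCast,
        inv_mul_cancel₀ (pow_ne_zero s hq), one_smul]
    have hPB : Bp * (Bm q) ^ (s + 1) = (Bm q) ^ s - c • ((Bm q) ^ s * Kop q) := by
      have : Bp * (Bm q) ^ (s + 1) = (Bp * Bm q) * (Bm q) ^ s := by
        rw [mul_assoc, ← pow_succ']
      rw [this, Bp_mul_Bm, sub_mul, one_mul, hKB]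
    rw [sub_mul, hPB, smul_mul_assoc, one_mul, mul_sub, mul_one, mul_smul_comm,
      mul_add, smul_add, pow_succ, sub_sub]
    module
  constructor
  · intro n hn
    obtain ⟨s, rfl⟩ : ∃ s, n = s + 1 := ⟨n - 1, (Nat.succ_pred_eq_of_pos hn).symm⟩
    have he : (1 : ℤ) - ((s + 1 : ℕ) : ℤ) = -(s : ℤ) := by push_cast; ring
    rw [he, Nat.add_sub_cancel]
    exact key s
  · intro m
    induction m with
    | zero => simp [lFact, opPoch]
    | succ s ih =>
        have he : (1 : ℤ) - ((s + 1 : ℕ) : ℤ) = -(s : ℤ) := by push_cast; ring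
        rw [he]
        rw [lFact, mul_assoc, pow_succ']
        have : (Bp - (q ^ (-(s : ℤ))) • (1 : Module.End ℝ Fock)) * (Bm q * (Bm q) ^ s)
            = (Bm q) ^ s * (1 - (q ^ (-(s : ℤ))) • (Bm q + Kop q)) := by
          rw [← pow_succ']; exact key s
        have hsc : q * q ^ (-(s : ℤ)) = q ^ (1 - (s : ℤ)) := by
          rw [sub_eq_add_neg, zpow_add₀ hq, zpow_one]
        rw [this, ← mul_assoc, ih, opPoch_comm, opPoch_pull, hsc]
end
end
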